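/- Let f : ℤ → F be any function and let R : A_ω → A_ω be the F-linear map determined by R(L_m) = f(m)·L_m for all m ∈ ℤ. Then R is a Rota–Baxter operator of weight 1 on A_ω if and only if f satisfies the homogeneous Rota–Baxter equations (odd) and (even). -/

import Mathlib

/-- The determinant `D(l,m,n)` defining the structure constants of the simple
3-Lie algebra `A_ω`. -/
noncomputable def Dw (F : Type*) [Field F] (l m n : ℤ) : F :=
  (-1 : F) ^ l * ((n : F) - (m : F)) - (-1 : F) ^ m * ((n : F) - (l : F)) +
    (-1 : F) ^ n * ((m : F) - (l : F))

/-- The unique `F`-trilinear bracket on `A_ω = ℤ →₀ F` with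
`[L_l, L_m, L_n] = D(l,m,n) • L_{l+m+n-1}` on basis vectors. -/
noncomputable def tripleBracket (F : Type*) [Field F] (x y z : ℤ →₀ F) : ℤ →₀ F :=
  x.sum fun l a => y.sum fun m b => z.sum fun n c =>
    Finsupp.single (l + m + n - 1) (a * b * c * Dw F l m n)

/-- The "odd" homogeneous Rota–Baxter equation. -/
def OddRB {F : Type*} [Field F] (f : ℤ → F) : Prop :=
  ∀ l m n : ℤ, l ≠ m →
    f (2*l+1) * f (2*m+1) * f (2*n) =
      (f (2*l+1) * f (2*m+1) + f (2*l+1) * f (2*n) + f (2*m+1) * f (2*n) +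
        f (2*l+1) + f (2*m+1) + f (2*n) + 1) * f (2*l+2*m+2*n+1)

/-- The "even" homogeneous Rota–Baxter equation. -/
def EvenRB {F : Type*} [Field F] (f : ℤ → F) : Prop :=
  ∀ l m n : ℤ, m ≠ n →
    f (2*l+1) * f (2*m) * f (2*n) =
      (f (2*l+1) * f (2*m) + f (2*l+1) * f (2*n) + f (2*m) * f (2*n) +
        f (2*l+1) + f (2*m) + f (2*n) + 1) * f (2*l+2*m+2*n)


section Aux
variable {F : Type*} [Field F]

lemma neg_one_zpow_even' (k : ℤ) : (-1:F)^(2*k) = 1 := by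
  rw [zpow_mul]; norm_num
lemma neg_one_zpow_odd' (k : ℤ) : (-1:F)^(2*k+1) = -1 := by
  rw [zpow_add₀ (by norm_num : (-1:F) ≠ 0), neg_one_zpow_even']; norm_num

lemma Dw_llx (l n : ℤ) : Dw F l l n = 0 := by unfold Dw; ring
lemma Dw_lxl (l m : ℤ) : Dw F l m l = 0 := by unfold Dw; ring
lemma Dw_xll (l m : ℤ) : Dw F l m m = 0 := by unfold Dw; ring

lemma Dw_ooo (a b c : ℤ) : Dw F (2*a+1) (2*b+1) (2*c+1) = 0 := by
  unfold Dw; rw [neg_one_zpow_odd', neg_one_zpow_odd', neg_one_zpow_odd']; push_cast; ring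
lemma Dw_eee (a b c : ℤ) : Dw F (2*a) (2*b) (2*c) = 0 := by
  unfold Dw; rw [neg_one_zpow_even', neg_one_zpow_even', neg_one_zpow_even']; push_cast; ring
lemma Dw_ooe (a b c : ℤ) : Dw F (2*a+1) (2*b+1) (2*c) = 4*((b:F)-a) := by
  unfold Dw; rw [neg_one_zpow_odd', neg_one_zpow_odd', neg_one_zpow_even']; push_cast; ring
lemma Dw_oeo (a b c : ℤ) : Dw F (2*a+1) (2*b) (2*c+1) = 4*((a:F)-c) := by
  unfold Dw; rw [neg_one_zpow_odd', neg_one_zpow_even', neg_one_zpow_odd']; push_cast; ring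
lemma Dw_eoo (a b c : ℤ) : Dw F (2*a) (2*b+1) (2*c+1) = 4*((c:F)-b) := by
  unfold Dw; rw [neg_one_zpow_even', neg_one_zpow_odd', neg_one_zpow_odd']; push_cast; ring
lemma Dw_eeo (a b c : ℤ) : Dw F (2*a) (2*b) (2*c+1) = 4*((a:F)-b) := by
  unfold Dw; rw [neg_one_zpow_even', neg_one_zpow_even', neg_one_zpow_odd']; push_cast; ring
lemma Dw_eoe (a b c : ℤ) : Dw F (2*a) (2*b+1) (2*c) = 4*((c:F)-a) := by
  unfold Dw; rw [neg_one_zpow_even', neg_one_zpow_odd', neg_one_zpow_even']; push_cast; ring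
lemma Dw_oee (a b c : ℤ) : Dw F (2*a+1) (2*b) (2*c) = 4*((b:F)-c) := by
  unfold Dw; rw [neg_one_zpow_odd', neg_one_zpow_even', neg_one_zpow_even']; push_cast; ring

/-- The scalar Rota-Baxter condition including the determinant factor. -/
def Kprop {F : Type*} [Field F] (f : ℤ → F) : Prop :=
  ∀ l m n : ℤ, f l * f m * f n * Dw F l m n =
    (f l * f m + f l * f n + f m * f n + f l + f m + f n + 1) * f (l+m+n-1) * Dw F l m n

lemma four_sub_ne [CharZero F] {a b : ℤ} (h : a ≠ b) : (4:F)*((a:F)-b) ≠ 0 :=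
  mul_ne_zero (by norm_num) (sub_ne_zero.mpr (by exact_mod_cast h))

lemma K_iff [CharZero F] (f : ℤ → F) : Kprop f ↔ OddRB f ∧ EvenRB f := by
  constructor
  · intro hK
    constructor
    · intro l m n hlm
      have h := hK (2*l+1) (2*m+1) (2*n)
      rw [Dw_ooe, show 2*l+1+(2*m+1)+2*n-1 = 2*l+2*m+2*n+1 by ring] at h
      exact mul_right_cancel₀ (four_sub_ne (fun hh => hlm hh.symm)) h
    · intro l m n hmn
      have h := hK (2*l+1) (2*m) (2*n)
      rw [Dw_oee, show 2*l+1+2*m+2*n-1 = 2*l+2*m+2*n by ring] at h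
      exact mul_right_cancel₀ (four_sub_ne hmn) h
  · rintro ⟨ho, he⟩ l m n
    rcases Int.even_or_odd l with ⟨a, rfl⟩ | ⟨a, rfl⟩ <;>
      rcases Int.even_or_odd m with ⟨b, rfl⟩ | ⟨b, rfl⟩ <;>
      rcases Int.even_or_odd n with ⟨c, rfl⟩ | ⟨c, rfl⟩ <;>
      (try simp only [← two_mul])
    · rw [Dw_eee]; ring
    · by_cases hab : a = b
      · subst hab; rw [Dw_llx]; ring
      · rw [Dw_eeo, show 2*a+2*b+(2*c+1)-1 = 2*c+2*a+2*b by ring]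
        linear_combination (4*((a:F)-b)) * he c a b hab
    · by_cases hac : a = c
      · subst hac; rw [Dw_lxl]; ring
      · rw [Dw_eoe, show 2*a+(2*b+1)+2*c-1 = 2*b+2*a+2*c by ring]
        linear_combination (4*((c:F)-a)) * he b a c hac
    · by_cases hbc : b = c
      · subst hbc; rw [Dw_xll]; ring
      · rw [Dw_eoo, show 2*a+(2*b+1)+(2*c+1)-1 = 2*b+2*c+2*a+1 by ring]
        linear_combination (4*((c:F)-b)) * ho b c a hbc
    · by_cases hbc : b = c
      · subst hbc; rw [Dw_xll]; ring
      · rw [Dw_oee, show 2*a+1+2*b+2*c-1 = 2*a+2*b+2*c by ring]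
        linear_combination (4*((b:F)-c)) * he a b c hbc
    · by_cases hac : a = c
      · subst hac; rw [Dw_lxl]; ring
      · rw [Dw_oeo, show 2*a+1+2*b+(2*c+1)-1 = 2*a+2*c+2*b+1 by ring]
        linear_combination (4*((a:F)-c)) * ho a c b hac
    · by_cases hab : a = b
      · subst hab; rw [Dw_llx]; ring
      · rw [Dw_ooe, show 2*a+1+(2*b+1)+2*c-1 = 2*a+2*b+2*c+1 by ring]
        linear_combination (4*((b:F)-a)) * ho a b c hab
    · rw [Dw_ooo]; ring

lemma tb_single (l m n : ℤ) (a b c : F) :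
    tripleBracket F (Finsupp.single l a) (Finsupp.single m b) (Finsupp.single n c)
      = Finsupp.single (l + m + n - 1) (a * b * c * Dw F l m n) := by
  unfold tripleBracket
  rw [Finsupp.sum_single_index, Finsupp.sum_single_index, Finsupp.sum_single_index] <;>
    simp only [zero_mul, mul_zero, Finsupp.single_zero, Finsupp.sum, Finset.sum_const_zero, Finsupp.support_zero, Finset.sum_empty]

lemma tb_add1 (x x' y z : ℤ →₀ F) :
    tripleBracket F (x + x') y z = tripleBracket F x y z + tripleBracket F x' y z := by
  unfold tripleBracket
  apply Finsupp.sum_add_index'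
  · intro l; simp only [zero_mul, Finsupp.single_zero, Finsupp.sum, Finset.sum_const_zero, Finsupp.support_zero, Finset.sum_empty]
  · intro l a a'
    rw [← Finsupp.sum_add]
    refine Finsupp.sum_congr fun m _ => ?_
    rw [← Finsupp.sum_add]
    refine Finsupp.sum_congr fun n _ => ?_
    rw [← Finsupp.single_add]; ring_nf

lemma tb_add2 (x y y' z : ℤ →₀ F) :
    tripleBracket F x (y + y') z = tripleBracket F x y z + tripleBracket F x y' z := by
  unfold tripleBracket
  rw [← Finsupp.sum_add]
  refine Finsupp.sum_congr fun l _ => ?_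
  apply Finsupp.sum_add_index'
  · intro m; simp only [zero_mul, mul_zero, Finsupp.single_zero, Finsupp.sum, Finset.sum_const_zero, Finsupp.support_zero, Finset.sum_empty]
  · intro m b b'
    rw [← Finsupp.sum_add]
    refine Finsupp.sum_congr fun n _ => ?_
    rw [← Finsupp.single_add]; ring_nf

lemma tb_add3 (x y z z' : ℤ →₀ F) :
    tripleBracket F x y (z + z') = tripleBracket F x y z + tripleBracket F x y z' := by
  unfold tripleBracket
  rw [← Finsupp.sum_add]
  refine Finsupp.sum_congr fun l _ => ?_
  rw [← Finsupp.sum_add]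
  refine Finsupp.sum_congr fun m _ => ?_
  apply Finsupp.sum_add_index'
  · intro n; simp only [mul_zero, zero_mul, Finsupp.single_zero]
  · intro n c c'
    rw [← Finsupp.single_add]; ring_nf

lemma tb_zero1 (y z : ℤ →₀ F) : tripleBracket F 0 y z = 0 := by
  unfold tripleBracket; exact Finsupp.sum_zero_index
lemma tb_zero2 (x z : ℤ →₀ F) : tripleBracket F x 0 z = 0 := by
  unfold tripleBracket; simp only [Finsupp.sum_zero_index, Finsupp.sum, Finset.sum_const_zero, Finsupp.support_zero, Finset.sum_empty]
lemma tb_zero3 (x y : ℤ →₀ F) : tripleBracket F x y 0 = 0 := by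
  unfold tripleBracket; simp only [Finsupp.sum_zero_index, Finsupp.sum, Finset.sum_const_zero, Finsupp.support_zero, Finset.sum_empty]

theorem main_iff_K (f : ℤ → F) (R : (ℤ →₀ F) →ₗ[F] (ℤ →₀ F))
    (hR : ∀ m : ℤ, R (Finsupp.single m 1) = f m • Finsupp.single m (1 : F)) :
    (∀ x₁ x₂ x₃ : ℤ →₀ F,
        tripleBracket F (R x₁) (R x₂) (R x₃) =
          R (tripleBracket F (R x₁) (R x₂) x₃ + tripleBracket F (R x₁) x₂ (R x₃) +
              tripleBracket F x₁ (R x₂) (R x₃) + tripleBracket F (R x₁) x₂ x₃ +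
              tripleBracket F x₁ (R x₂) x₃ + tripleBracket F x₁ x₂ (R x₃) +
              tripleBracket F x₁ x₂ x₃)) ↔ Kprop f := by
  have hRs : ∀ (k : ℤ) (c : F), R (Finsupp.single k c) = Finsupp.single k (c * f k) := by
    intro k c
    have h1 : (Finsupp.single k c : ℤ →₀ F) = c • Finsupp.single k 1 := by
      rw [Finsupp.smul_single, smul_eq_mul, mul_one]
    rw [h1, map_smul, hR, smul_smul, Finsupp.smul_single, smul_eq_mul, mul_one]
  constructor
  · intro H l m n
    have h := H (Finsupp.single l 1) (Finsupp.single m 1) (Finsupp.single n 1)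
    rw [hRs, hRs, hRs] at h
    simp only [one_mul] at h
    rw [tb_single, tb_single, tb_single, tb_single, tb_single, tb_single, tb_single,
      tb_single] at h
    simp only [← Finsupp.single_add, hRs] at h
    have h2 := Finsupp.single_injective (l + m + n - 1) h
    linear_combination h2
  · intro hK x₁ x₂ x₃
    induction x₁ using Finsupp.induction_linear with
    | zero =>
      simp only [map_zero, tb_zero1, add_zero, zero_add]
    | add u v hu hv =>
      simp only [map_add, tb_add1]
      rw [hu, hv]
      simp only [map_add]
      abel
    | single l a =>
      induction x₂ using Finsupp.induction_linear with
      | zero =>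
        simp only [map_zero, tb_zero2, add_zero, zero_add]
      | add u v hu hv =>
        simp only [map_add, tb_add2]
        rw [hu, hv]
        simp only [map_add]
        abel
      | single m b =>
        induction x₃ using Finsupp.induction_linear with
        | zero =>
          simp only [map_zero, tb_zero3, add_zero, zero_add]
        | add u v hu hv =>
          simp only [map_add, tb_add3]
          rw [hu, hv]
          simp only [map_add]
          abel
        | single n c =>
          rw [hRs, hRs, hRs]
          rw [tb_single, tb_single, tb_single, tb_single, tb_single, tb_single, tb_single,
            tb_single]
          simp only [← Finsupp.single_add]
          rw [hRs]
          refine congrArg _ ?_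
          linear_combination (a * b * c) * hK l m n

end Aux

theorem statement1 (F : Type*) [Field F] [CharZero F]
    (f : ℤ → F) (R : (ℤ →₀ F) →ₗ[F] (ℤ →₀ F))
    (hR : ∀ m : ℤ, R (Finsupp.single m 1) = f m • Finsupp.single m (1 : F)) :
    (∀ x₁ x₂ x₃ : ℤ →₀ F,
        tripleBracket F (R x₁) (R x₂) (R x₃) =
          R (tripleBracket F (R x₁) (R x₂) x₃ + tripleBracket F (R x₁) x₂ (R x₃) +
              tripleBracket F x₁ (R x₂) (R x₃) + tripleBracket F (R x₁) x₂ x₃ +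
              tripleBracket F x₁ (R x₂) x₃ + tripleBracket F x₁ x₂ (R x₃) +
              tripleBracket F x₁ x₂ x₃)) ↔
      (OddRB f ∧ EvenRB f) := by
  exact (main_iff_K f R hR).trans (K_iff f)
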